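/- For every integer a ≥ 1, the Frobenius number of the quadruple (21a+10, 21a+13, 42a+21, 42a+27) is g(21a+10, 21a+13, 42a+21, 42a+27) = 126a² + 123a + 29. -/

import Mathlib

lemma mem_closure_quad {p1 p2 p3 p4 n : ℕ} :
    n ∈ AddSubmonoid.closure ({p1, p2, p3, p4} : Set ℕ) ↔
      ∃ x y z w : ℕ, x * p1 + y * p2 + z * p3 + w * p4 = n := by
  constructor
  · intro h
    induction h using AddSubmonoid.closure_induction with
    | mem u hu =>
      rcases hu with rfl | rfl | rfl | hu
      · exact ⟨1, 0, 0, 0, by ring⟩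
      · exact ⟨0, 1, 0, 0, by ring⟩
      · exact ⟨0, 0, 1, 0, by ring⟩
      · rcases hu with rfl; exact ⟨0, 0, 0, 1, by ring⟩
    | zero => exact ⟨0, 0, 0, 0, by ring⟩
    | add u v _ _ ihu ihv =>
      obtain ⟨x1, y1, z1, w1, rfl⟩ := ihu
      obtain ⟨x2, y2, z2, w2, rfl⟩ := ihv
      exact ⟨x1 + x2, y1 + y2, z1 + z2, w1 + w2, by ring⟩
  · rintro ⟨x, y, z, w, rfl⟩
    have h1 : p1 ∈ AddSubmonoid.closure ({p1, p2, p3, p4} : Set ℕ) :=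
      AddSubmonoid.subset_closure (by simp)
    have h2 : p2 ∈ AddSubmonoid.closure ({p1, p2, p3, p4} : Set ℕ) :=
      AddSubmonoid.subset_closure (by simp)
    have h3 : p3 ∈ AddSubmonoid.closure ({p1, p2, p3, p4} : Set ℕ) :=
      AddSubmonoid.subset_closure (by simp)
    have h4 : p4 ∈ AddSubmonoid.closure ({p1, p2, p3, p4} : Set ℕ) :=
      AddSubmonoid.subset_closure (by simp)
    have := AddSubmonoid.add_mem _ (AddSubmonoid.add_mem _
      (AddSubmonoid.add_mem _ (nsmul_mem h1 x) (nsmul_mem h2 y))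
      (nsmul_mem h3 z)) (nsmul_mem h4 w)
    simpa [smul_eq_mul] using this

/-- Witness lemma: every residue `t ≤ 21a+9` has a cheap representation. -/
lemma aux_wit : ∀ a : ℕ, 1 ≤ a → ∀ t : ℕ, t ≤ 21 * a + 9 →
    ∃ y z w : ℕ, 3 * y + z + 7 * w = t ∧ y + 2 * z + 2 * w ≤ 6 * a + 3 := by
  intro a ha
  induction a, ha using Nat.le_induction with
  | base =>
    intro t ht
    norm_num at ht ⊢
    interval_cases t
    exacts [⟨0,0,0, by omega⟩, ⟨0,1,0, by omega⟩, ⟨0,2,0, by omega⟩, ⟨1,0,0, by omega⟩,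
      ⟨1,1,0, by omega⟩, ⟨1,2,0, by omega⟩, ⟨2,0,0, by omega⟩, ⟨0,0,1, by omega⟩,
      ⟨2,2,0, by omega⟩, ⟨3,0,0, by omega⟩, ⟨1,0,1, by omega⟩, ⟨1,1,1, by omega⟩,
      ⟨4,0,0, by omega⟩, ⟨2,0,1, by omega⟩, ⟨0,0,2, by omega⟩, ⟨5,0,0, by omega⟩,
      ⟨3,0,1, by omega⟩, ⟨1,0,2, by omega⟩, ⟨6,0,0, by omega⟩, ⟨4,0,1, by omega⟩,
      ⟨2,0,2, by omega⟩, ⟨0,0,3, by omega⟩, ⟨5,0,1, by omega⟩, ⟨3,0,2, by omega⟩,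
      ⟨1,0,3, by omega⟩, ⟨6,0,1, by omega⟩, ⟨4,0,2, by omega⟩, ⟨2,0,3, by omega⟩,
      ⟨0,0,4, by omega⟩, ⟨5,0,2, by omega⟩, ⟨3,0,3, by omega⟩]
  | succ b hb ih =>
    intro t ht
    by_cases h : t ≤ 21 * b + 9
    · obtain ⟨y, z, w, h1, h2⟩ := ih t h
      exact ⟨y, z, w, h1, by omega⟩
    · obtain ⟨y, z, w, h1, h2⟩ := ih (t - 21) (by omega)
      exact ⟨y, z, w + 3, by omega, by omega⟩

/-- For every integer `a ≥ 1`, the Frobenius number of the quadruple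
`(21a+10, 21a+13, 42a+21, 42a+27)` is `126a² + 123a + 29`. -/
theorem frobenius_quadruple_case3 (a : ℕ) (ha : 1 ≤ a) :
    FrobeniusNumber (126 * a ^ 2 + 123 * a + 29)
      ({21 * a + 10, 21 * a + 13, 42 * a + 21, 42 * a + 27} : Set ℕ) := by
  constructor
  · -- 126a²+123a+29 is not representable
    intro hmem
    rw [mem_closure_quad] at hmem
    exact (by
      obtain ⟨x, y, z, w, heq⟩ := hmem
      have hkey : (x + y + 2*z + 2*w) * (21*a + 10) + (3*y + z + 7*w)
          = 126 * a ^ 2 + 123 * a + 29 := by rw [← heq]; ring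
      have hle : (x + y + 2*z + 2*w) * (21*a + 10) ≤ 126 * a ^ 2 + 123 * a + 29 :=
        Nat.le.intro hkey
      have hC : x + y + 2*z + 2*w ≤ 6*a + 2 := by
        by_contra hC'
        push_neg at hC'
        have h1 : (6*a + 3) * (21*a + 10) ≤ (x + y + 2*z + 2*w) * (21*a + 10) :=
          Nat.mul_le_mul_right _ hC'
        nlinarith [h1, hle]
      obtain ⟨d, hd⟩ : ∃ d, x + y + 2*z + 2*w + d = 6*a + 2 := ⟨6*a + 2 - (x + y + 2*z + 2*w), by omega⟩
      have h2 : (x + y + 2*z + 2*w) * (21*a + 10) + (d + 1) * (21*a + 10)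
          = 126 * a ^ 2 + 123 * a + 30 := by
        have : (x + y + 2*z + 2*w + d + 1) * (21*a + 10)
            = 126 * a ^ 2 + 123 * a + 30 := by
          rw [show x + y + 2*z + 2*w + d + 1 = 6*a + 3 by omega]; ring
        linarith [this, (show (x + y + 2*z + 2*w + d + 1) * (21*a + 10)
          = (x + y + 2*z + 2*w) * (21*a + 10) + (d + 1) * (21*a + 10) by ring)]
      have hV : 3*y + z + 7*w + 1 = (d + 1) * (21*a + 10) := by linarith [hkey, h2]
      have hVge : 21*a + 10 ≤ 3*y + z + 7*w + 1 := by
        have : 1 * (21*a + 10) ≤ (d + 1) * (21*a + 10) :=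
          Nat.mul_le_mul_right _ (by omega)
        omega
      -- 2V ≤ 7C gives the contradiction
      omega : False)
  · -- every n > F is representable
    rintro n hn
    by_contra hgt
    push_neg at hgt
    rw [Set.mem_setOf_eq] at hn
    apply hn
    have hp : 0 < 21 * a + 10 := by omega
    have hF : 126 * a ^ 2 + 123 * a + 30 ≤ n := hgt
    have hk : 6*a + 3 ≤ n / (21*a + 10) := by
      rw [Nat.le_div_iff_mul_le hp]
      nlinarith [hF]
    have ht : n % (21*a + 10) ≤ 21*a + 9 := by
      have := Nat.mod_lt n hp
      omega
    obtain ⟨y, z, w, hv, hw⟩ := aux_wit a ha _ ht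
    obtain ⟨x, hx⟩ : ∃ x, x + (y + 2*z + 2*w) = n / (21*a + 10) := ⟨n / (21*a + 10) - (y + 2*z + 2*w), by omega⟩
    rw [mem_closure_quad]
    refine ⟨x, y, z, w, ?_⟩
    calc x * (21*a + 10) + y * (21*a + 13) + z * (42*a + 21) + w * (42*a + 27)
        = (21*a + 10) * (x + (y + 2*z + 2*w)) + (3*y + z + 7*w) := by ring
      _ = (21*a + 10) * (n / (21*a + 10)) + n % (21*a + 10) := by rw [hx, hv]
      _ = n := Nat.div_add_mod _ _
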